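/- Let τ_d := sup_{λ ≤ 0} inf_{x ∈ 𝒳} (f(x) − λ·g(x)) and suppose strong duality fails, i.e. τ_d < τ_p. Then v(τ) = 0 for every τ with τ_d < τ < τ_p; in particular inf{τ ∈ ℝ : v(τ) = 0} = τ_d < τ_p, so the leftmost root of the level-set value function is strictly smaller than the primal optimal value. -/

import Mathlib

lemma sep_lemma {n : ℕ} (𝒳 : Set (EuclideanSpace ℝ (Fin n))) (hXcvx : Convex ℝ 𝒳)
    (f g : EuclideanSpace ℝ (Fin n) → ℝ)
    (hf : ConvexOn ℝ Set.univ f) (hg : ConvexOn ℝ Set.univ g)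
    (τ ε : ℝ) (hε : 0 < ε)
    (x0 : EuclideanSpace ℝ (Fin n)) (hx0 : x0 ∈ 𝒳) (hx0g : g x0 ≤ 0)
    (hlvl : ∀ x ∈ 𝒳, f x ≤ τ → ε ≤ g x) :
    ∃ μ : ℝ, 0 ≤ μ ∧ ∀ x ∈ 𝒳, τ + μ * ε ≤ f x + μ * g x := by
  classical
  set S : Set (ℝ × ℝ) := {p | ∃ x ∈ 𝒳, f x ≤ p.1 ∧ g x ≤ p.2} with hSdef
  have hScvx : Convex ℝ S := by
    rintro p ⟨x, hx, hpx1, hpx2⟩ q ⟨y, hy, hqy1, hqy2⟩ a b ha hb hab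
    refine ⟨a • x + b • y, hXcvx hx hy ha hb hab, ?_, ?_⟩
    · have h1 := hf.2 (Set.mem_univ x) (Set.mem_univ y) ha hb hab
      simp only [smul_eq_mul] at h1
      have : (a • p + b • q).1 = a * p.1 + b * q.1 := by simp [Prod.smul_fst, mul_comm]
      rw [this]
      nlinarith
    · have h1 := hg.2 (Set.mem_univ x) (Set.mem_univ y) ha hb hab
      simp only [smul_eq_mul] at h1
      have : (a • p + b • q).2 = a * p.2 + b * q.2 := by simp [Prod.smul_snd, mul_comm]
      rw [this]
      nlinarith
  set C : Set (ℝ × ℝ) := Set.Iio τ ×ˢ Set.Iio ε with hCdef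
  have hCcvx : Convex ℝ C := (convex_Iio τ).prod (convex_Iio ε)
  have hCopen : IsOpen C := (isOpen_Iio).prod isOpen_Iio
  have hdisj : Disjoint C S := by
    rw [Set.disjoint_left]
    rintro p ⟨hp1, hp2⟩ ⟨x, hx, hfx, hgx⟩
    have : ε ≤ g x := hlvl x hx (le_of_lt (lt_of_le_of_lt hfx hp1))
    exact absurd (lt_of_le_of_lt hgx hp2) (not_lt.mpr this)
  obtain ⟨φ, u, hC, hS⟩ := geometric_hahn_banach_open hCcvx hCopen hScvx hdisj
  set α := φ (1, 0) with hαdef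
  set β := φ (0, 1) with hβdef
  have hφ : ∀ p : ℝ × ℝ, φ p = α * p.1 + β * p.2 := by
    intro p
    have hp : p = p.1 • ((1 : ℝ), (0 : ℝ)) + p.2 • ((0 : ℝ), (1 : ℝ)) := by
      ext <;> simp
    conv_lhs => rw [hp]
    rw [map_add, map_smul, map_smul]
    simp [smul_eq_mul, mul_comm]
    rfl
  have hCv : ∀ a b : ℝ, a < τ → b < ε → α * a + β * b < u := by
    intro a b ha hb
    have := hC (a, b) ⟨ha, hb⟩
    rwa [hφ] at this
  have hSv : ∀ x ∈ 𝒳, u ≤ α * f x + β * g x := by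
    intro x hx
    have := hS (f x, g x) ⟨x, hx, le_refl _, le_refl _⟩
    rwa [hφ] at this
  have hα : 0 ≤ α := by
    by_contra hneg
    push_neg at hneg
    set A := α * (τ - 1) + β * (ε - 1) with hA
    set t : ℝ := max 0 ((u - A) / (-α)) with ht
    have ht0 : 0 ≤ t := le_max_left _ _
    have ht1 : (u - A) / (-α) ≤ t := le_max_right _ _
    have hαt : u - A ≤ t * (-α) := by
      rw [div_le_iff₀ (by linarith : (0:ℝ) < -α)] at ht1
      exact ht1
    have := hCv (τ - 1 - t) (ε - 1) (by linarith) (by linarith)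
    nlinarith
  have hβ : 0 ≤ β := by
    by_contra hneg
    push_neg at hneg
    set A := α * (τ - 1) + β * (ε - 1) with hA
    set t : ℝ := max 0 ((u - A) / (-β)) with ht
    have ht0 : 0 ≤ t := le_max_left _ _
    have ht1 : (u - A) / (-β) ≤ t := le_max_right _ _
    have hβt : u - A ≤ t * (-β) := by
      rw [div_le_iff₀ (by linarith : (0:ℝ) < -β)] at ht1
      exact ht1
    have := hCv (τ - 1) (ε - 1 - t) (by linarith) (by linarith)
    nlinarith
  have hu : α * τ + β * ε ≤ u := by
    by_contra hlt
    push_neg at hlt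
    rcases (add_nonneg hα hβ).eq_or_lt with hz | hz
    · have := hCv (τ - 1) (ε - 1) (by linarith) (by linarith)
      nlinarith
    · set δ := (α * τ + β * ε - u) / (α + β) with hδ
      have hδpos : 0 < δ := div_pos (by linarith) hz
      have hc : δ * (α + β) = α * τ + β * ε - u := by
        rw [hδ, div_mul_cancel₀]
        exact ne_of_gt hz
      have := hCv (τ - δ) (ε - δ) (by linarith) (by linarith)
      nlinarith
  rcases hα.eq_or_lt with hα0 | hαpos
  · rcases hβ.eq_or_lt with hβ0 | hβpos
    · exfalso
      have h1 := hCv (τ - 1) (ε - 1) (by linarith) (by linarith)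
      have h2 := hSv x0 hx0
      rw [← hα0, ← hβ0] at h1 h2
      linarith
    · exfalso
      have h2 := hSv x0 hx0
      rw [← hα0] at h2 hu
      nlinarith
  · refine ⟨β / α, div_nonneg hβ hα, fun x hx => ?_⟩
    have h1 : α * τ + β * ε ≤ α * f x + β * g x := le_trans hu (hSv x hx)
    have e1 : α * (τ + β / α * ε) = α * τ + β * ε := by
      field_simp
    have e2 : α * (f x + β / α * g x) = α * f x + β * g x := by
      field_simp
    have h2 : α * (τ + β / α * ε) ≤ α * (f x + β / α * g x) := by
      rw [e1, e2]; exact h1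
    exact le_of_mul_le_mul_left h2 hαpos

/-- **Failure of strong duality implies a spurious leftmost root.**
With `𝒳 ⊆ ℝⁿ` nonempty convex, `f, g` convex lsc, primal value
`τp = inf {f(x) : x ∈ 𝒳, g(x) ≤ 0}` finite (represented by the real number `τp`),
`τd = sup_{λ ≤ 0} inf_{x ∈ 𝒳} (f(x) - λ g(x))` the Lagrangian dual value, and
`v(τ) = inf {g(x) : x ∈ 𝒳, f(x) ≤ τ}` the level-set value function: if strong duality
fails, i.e. `τd < τp`, then `v(τ) = 0` for every `τd < τ < τp`; in particular
`inf {τ : v(τ) = 0} = τd < τp`. -/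
theorem spurious_root_without_strong_duality {n : ℕ}
    (𝒳 : Set (EuclideanSpace ℝ (Fin n))) (hXne : 𝒳.Nonempty) (hXcvx : Convex ℝ 𝒳)
    (f g : EuclideanSpace ℝ (Fin n) → ℝ)
    (hf : ConvexOn ℝ Set.univ f) (hflsc : LowerSemicontinuous f)
    (hg : ConvexOn ℝ Set.univ g) (hglsc : LowerSemicontinuous g)
    (τp : ℝ)
    (hτp : (τp : EReal) = sInf {y : EReal | ∃ x ∈ 𝒳, g x ≤ 0 ∧ y = (f x : EReal)})
    (v : ℝ → EReal)
    (hv : ∀ τ : ℝ, v τ = sInf {y : EReal | ∃ x ∈ 𝒳, f x ≤ τ ∧ y = (g x : EReal)})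
    (τd : EReal)
    (hτd : τd = ⨆ (lam : ℝ) (_ : lam ≤ 0), ⨅ x ∈ 𝒳, ((f x - lam * g x : ℝ) : EReal))
    (hgap : τd < (τp : EReal)) :
    (∀ τ : ℝ, τd < (τ : EReal) → τ < τp → v τ = 0) ∧
      sInf {t : EReal | ∃ τ : ℝ, t = (τ : EReal) ∧ v τ = 0} = τd ∧
      τd < (τp : EReal) := by
  have hsep := sep_lemma 𝒳 hXcvx f g hf hg
  -- a feasible point exists
  have hfeas : ∃ x ∈ 𝒳, g x ≤ 0 := by
    by_contra h
    push_neg at h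
    have hempty : {y : EReal | ∃ x ∈ 𝒳, g x ≤ 0 ∧ y = (f x : EReal)} = ∅ := by
      ext y
      simp only [Set.mem_setOf_eq, Set.mem_empty_iff_false, iff_false]
      rintro ⟨x, hx, hgx, _⟩
      exact absurd hgx (not_le.mpr (h x hx))
    rw [hempty, sInf_empty] at hτp
    exact (EReal.coe_ne_top τp) hτp
  obtain ⟨x0, hx0, hx0g⟩ := hfeas
  have part1 : ∀ τ : ℝ, τd < (τ : EReal) → τ < τp → v τ = 0 := by
    intro τ hτ1 hτ2
    rw [hv]
    have hge : (0 : EReal) ≤ sInf {y : EReal | ∃ x ∈ 𝒳, f x ≤ τ ∧ y = (g x : EReal)} := by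
      apply le_sInf
      rintro y ⟨x, hx, hfx, rfl⟩
      by_contra hneg
      push_neg at hneg
      have hgx : g x ≤ 0 := by exact_mod_cast hneg.le
      have h1 : (τp : EReal) ≤ (f x : EReal) := hτp ▸ sInf_le ⟨x, hx, hgx, rfl⟩
      have h2 : τp ≤ f x := by exact_mod_cast h1
      linarith
    have hle : sInf {y : EReal | ∃ x ∈ 𝒳, f x ≤ τ ∧ y = (g x : EReal)} ≤ 0 := by
      by_contra hpos
      push_neg at hpos
      obtain ⟨ε, hε0, hεlt⟩ := EReal.exists_between_coe_real hpos
      have hε : (0 : ℝ) < ε := by exact_mod_cast hε0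
      have hlvl : ∀ x ∈ 𝒳, f x ≤ τ → ε ≤ g x := by
        intro x hx hfx
        have h1 : sInf {y : EReal | ∃ x ∈ 𝒳, f x ≤ τ ∧ y = (g x : EReal)} ≤ (g x : EReal) :=
          sInf_le ⟨x, hx, hfx, rfl⟩
        exact_mod_cast (hεlt.trans_le h1).le
      obtain ⟨μ, hμ, hsepμ⟩ := hsep τ ε hε x0 hx0 hx0g hlvl
      have hdual : ((τ + μ * ε : ℝ) : EReal) ≤ τd := by
        rw [hτd]
        refine le_iSup₂_of_le (-μ) (by linarith) ?_
        refine le_iInf₂ fun x hx => ?_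
        refine EReal.coe_le_coe_iff.mpr ?_
        have h := hsepμ x hx
        have he : f x - -μ * g x = f x + μ * g x := by ring
        linarith [he]
      have h2 : (τ : EReal) ≤ ((τ + μ * ε : ℝ) : EReal) := by
        refine EReal.coe_le_coe_iff.mpr ?_
        nlinarith
      exact absurd (h2.trans hdual) (not_le.mpr hτ1)
    exact le_antisymm hle hge
  refine ⟨part1, ?_, hgap⟩
  set R : Set EReal := {t : EReal | ∃ τ : ℝ, t = (τ : EReal) ∧ v τ = 0} with hR
  have hge : τd ≤ sInf R := by
    apply le_sInf
    rintro t ⟨τ, rfl, hvτ⟩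
    by_contra hlt
    push_neg at hlt
    obtain ⟨τ₁, hτ1a, hτ1b⟩ := EReal.exists_between_coe_real hlt
    rw [hτd, lt_iSup_iff] at hτ1b
    obtain ⟨lam, hτ1b⟩ := hτ1b
    rw [lt_iSup_iff] at hτ1b
    obtain ⟨hlam, hτ1b⟩ := hτ1b
    set μ := -lam with hμdef
    have hμ : 0 ≤ μ := by simp [hμdef]; linarith
    have hall : ∀ x ∈ 𝒳, τ₁ < f x + μ * g x := by
      intro x hx
      have h1 := hτ1b.trans_le (iInf₂_le x hx)
      have h2 : τ₁ < f x - lam * g x := by exact_mod_cast h1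
      have he : f x - lam * g x = f x + μ * g x := by rw [hμdef]; ring
      linarith [he]
    have hττ1 : τ < τ₁ := by exact_mod_cast hτ1a
    by_cases hne : ∃ x ∈ 𝒳, f x ≤ τ
    · obtain ⟨z, hz, hfz⟩ := hne
      have hμpos : 0 < μ := by
        rcases hμ.eq_or_lt with h0 | h0
        · exfalso
          have := hall z hz
          rw [← h0] at this
          simp at this
          linarith
        · exact h0
      set δ := (τ₁ - τ) / μ with hδdef
      have hδpos : 0 < δ := div_pos (by linarith) hμpos
      have hvge : (δ : EReal) ≤ v τ := by
        rw [hv]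
        apply le_sInf
        rintro y ⟨x, hx, hfx, rfl⟩
        refine EReal.coe_le_coe_iff.mpr ?_
        have h1 := hall x hx
        rw [hδdef, div_le_iff₀ hμpos]
        nlinarith
      rw [hvτ] at hvge
      have : δ ≤ 0 := by exact_mod_cast hvge
      linarith
    · push_neg at hne
      have hempty : {y : EReal | ∃ x ∈ 𝒳, f x ≤ τ ∧ y = (g x : EReal)} = ∅ := by
        ext y
        simp only [Set.mem_setOf_eq, Set.mem_empty_iff_false, iff_false]
        rintro ⟨x, hx, hfx, _⟩
        exact absurd hfx (not_le.mpr (hne x hx))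
      rw [hv, hempty, sInf_empty] at hvτ
      simp at hvτ
  have hle : sInf R ≤ τd := by
    by_contra h
    push_neg at h
    have hlt : τd < min (sInf R) ((τp : ℝ) : EReal) := lt_min h hgap
    obtain ⟨τ, h1, h2⟩ := EReal.exists_between_coe_real hlt
    have h3 : (τ : EReal) < sInf R := lt_of_lt_of_le h2 (min_le_left _ _)
    have h4 : τ < τp := by
      have := lt_of_lt_of_le h2 (min_le_right _ _)
      exact_mod_cast this
    have hv0 : v τ = 0 := part1 τ h1 h4
    have : sInf R ≤ (τ : EReal) := sInf_le ⟨τ, rfl, hv0⟩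
    exact absurd this (not_le.mpr h3)
  exact le_antisymm hle hge
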